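/- Let K ⊂ ℝⁿ and T ⊂ ℝⁿ be convex bodies containing the origin in their interiors. Then the infimum defining ξ_T(K) is attained by a tuple with at most n+1 points: there exist m with 2 ≤ m ≤ n+1 and points q₁,…,q_m ∈ ℝⁿ such that {q₁,…,q_m} does not fit into a translate of int K and ℓ_T(q₁,…,q_m) = ξ_T(K). -/

import Mathlib

open scoped BigOperators Pointwise RealInnerProductSpace
open MeasureTheory

noncomputable section

/-- The support-function "norm" `‖q‖_T = max_{p ∈ T} ⟨p, q⟩`. -/
def suppNorm {d : ℕ} (T : Set (EuclideanSpace ℝ (Fin d)))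
    (q : EuclideanSpace ℝ (Fin d)) : ℝ :=
  sSup ((fun p : EuclideanSpace ℝ (Fin d) => ⟪p, q⟫) '' T)

/-- Cyclic successor on `Fin m`. -/
def cyc {m : ℕ} (i : Fin m) : Fin m := ⟨(i.val + 1) % m, Nat.mod_lt _ i.pos⟩

/-- The `T`-length of the closed polygonal line through `q 0, …, q (m-1)`. -/
def polyLen {d : ℕ} (T : Set (EuclideanSpace ℝ (Fin d))) {m : ℕ}
    (q : Fin m → EuclideanSpace ℝ (Fin d)) : ℝ :=
  ∑ i : Fin m, suppNorm T (q (cyc i) - q i)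

/-- `q` does not fit into a translate of the interior of `K`. -/
def NotFit {d : ℕ} (K : Set (EuclideanSpace ℝ (Fin d))) {m : ℕ}
    (q : Fin m → EuclideanSpace ℝ (Fin d)) : Prop :=
  ∀ t : EuclideanSpace ℝ (Fin d), ¬ (∀ i, q i - t ∈ interior K)

/-- `ξ_T(K)`: the infimum of `T`-lengths of closed polygonal lines not fitting into a
translate of the interior of `K`. -/
def xi {d : ℕ} (T K : Set (EuclideanSpace ℝ (Fin d))) : ℝ :=
  sInf { L : ℝ | ∃ m : ℕ, 2 ≤ m ∧ ∃ q : Fin m → EuclideanSpace ℝ (Fin d),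
    NotFit K q ∧ L = polyLen T q }

/-- A convex body: compact, convex, with nonempty interior. -/
def IsConvexBody {d : ℕ} (K : Set (EuclideanSpace ℝ (Fin d))) : Prop :=
  IsCompact K ∧ Convex ℝ K ∧ (interior K).Nonempty

/-- The polar set `S° = {p : ⟨p, q⟩ ≤ 1 ∀ q ∈ S}`. -/
def polarSet {d : ℕ} (S : Set (EuclideanSpace ℝ (Fin d))) :
    Set (EuclideanSpace ℝ (Fin d)) :=
  { p | ∀ q ∈ S, ⟪p, q⟫ ≤ 1 }

/-- The permutohedron: the Minkowski sum of all edges of the simplex with vertices `v`. -/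
def permutohedron {n : ℕ} (v : Fin (n + 1) → EuclideanSpace ℝ (Fin n)) :
    Set (EuclideanSpace ℝ (Fin n)) :=
  ∑ p ∈ Finset.univ.filter (fun p : Fin (n + 1) × Fin (n + 1) => p.1 < p.2),
    segment ℝ (v p.1) (v p.2)

end

open Fin.NatCast

noncomputable section AuxLemmas
variable {d : ℕ} {T : Set (EuclideanSpace ℝ (Fin d))}

lemma suppNorm_bddAbove (hTc : IsCompact T) (q : EuclideanSpace ℝ (Fin d)) :
    BddAbove ((fun p : EuclideanSpace ℝ (Fin d) => ⟪p, q⟫) '' T) :=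
  (hTc.image (Continuous.inner continuous_id continuous_const)).bddAbove

lemma suppNorm_nonneg (hTc : IsCompact T) (hT0 : (0:EuclideanSpace ℝ (Fin d)) ∈ T)
    (q : EuclideanSpace ℝ (Fin d)) : 0 ≤ suppNorm T q :=
  le_csSup (suppNorm_bddAbove hTc q) ⟨0, hT0, inner_zero_left q⟩

lemma suppNorm_le_mul (hT0 : (0:EuclideanSpace ℝ (Fin d)) ∈ T) {R : ℝ}
    (hR : ∀ p ∈ T, ‖p‖ ≤ R) (q : EuclideanSpace ℝ (Fin d)) :
    suppNorm T q ≤ R * ‖q‖ := by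
  apply csSup_le (Set.Nonempty.image _ ⟨0, hT0⟩)
  rintro x ⟨p, hp, rfl⟩
  calc ⟪p, q⟫ ≤ ‖p‖ * ‖q‖ := real_inner_le_norm p q
    _ ≤ R * ‖q‖ := mul_le_mul_of_nonneg_right (hR p hp) (norm_nonneg q)

lemma suppNorm_add_le (hTc : IsCompact T) (hT0 : (0:EuclideanSpace ℝ (Fin d)) ∈ T)
    (a b : EuclideanSpace ℝ (Fin d)) :
    suppNorm T (a + b) ≤ suppNorm T a + suppNorm T b := by
  apply csSup_le (Set.Nonempty.image _ ⟨0, hT0⟩)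
  rintro x ⟨p, hp, rfl⟩
  show ⟪p, a + b⟫ ≤ _
  rw [inner_add_right]
  exact add_le_add (le_csSup (suppNorm_bddAbove hTc a) ⟨p, hp, rfl⟩)
    (le_csSup (suppNorm_bddAbove hTc b) ⟨p, hp, rfl⟩)

lemma suppNorm_zero (hT0 : (0:EuclideanSpace ℝ (Fin d)) ∈ T) :
    suppNorm T 0 = 0 := by
  have : (fun p : EuclideanSpace ℝ (Fin d) => ⟪p, (0:EuclideanSpace ℝ (Fin d))⟫) '' T = {0} := by
    ext x
    simp only [Set.mem_image, Set.mem_singleton_iff]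
    constructor
    · rintro ⟨p, _, rfl⟩; exact inner_zero_right p
    · rintro rfl; exact ⟨0, hT0, inner_zero_right 0⟩
  rw [suppNorm, this, csSup_singleton]

lemma suppNorm_lower (hTc : IsCompact T) (hT0 : (0:EuclideanSpace ℝ (Fin d)) ∈ interior T) :
    ∃ r > (0:ℝ), ∀ w, r * ‖w‖ ≤ suppNorm T w := by
  obtain ⟨r, hr, hball⟩ := Metric.mem_nhds_iff.mp (mem_interior_iff_mem_nhds.mp hT0)
  refine ⟨r / 2, by linarith, fun w => ?_⟩
  rcases eq_or_ne w 0 with rfl | hw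
  · simp [suppNorm_zero (interior_subset hT0)]
  · have hwn : (0:ℝ) < ‖w‖ := norm_pos_iff.mpr hw
    set p : EuclideanSpace ℝ (Fin d) := (r / (2 * ‖w‖)) • w with hp
    have hpT : p ∈ T := by
      apply hball
      simp only [Metric.mem_ball, dist_zero_right, hp, norm_smul, Real.norm_eq_abs]
      rw [abs_of_pos (by positivity)]
      rw [div_mul_eq_mul_div, mul_comm]
      calc ‖w‖ * r / (2 * ‖w‖) = r / 2 := by field_simp
        _ < r := by linarith
    have : ⟪p, w⟫ = r / 2 * ‖w‖ := by
      rw [hp, real_inner_smul_left, real_inner_self_eq_norm_sq]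
      field_simp
    calc r / 2 * ‖w‖ = ⟪p, w⟫ := this.symm
      _ ≤ suppNorm T w := le_csSup (suppNorm_bddAbove hTc w) ⟨p, hpT, rfl⟩


section NatIndexing
variable {d : ℕ} {T K : Set (EuclideanSpace ℝ (Fin d))}

lemma cyc_eq_add_one {m : ℕ} [NeZero m] (j : Fin m) : cyc j = j + 1 := by
  apply Fin.val_injective
  show (j.val + 1) % m = _
  rw [Fin.add_def, Fin.val_one']
  simp only [Fin.val_mk]
  conv_rhs => rw [← Nat.mod_eq_of_lt j.isLt]
  rw [← Nat.add_mod]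

-- chain inequality over ℕ
lemma suppNorm_chain (hsub : ∀ a b : EuclideanSpace ℝ (Fin d),
      suppNorm T (a + b) ≤ suppNorm T a + suppNorm T b)
    (hzero : suppNorm T 0 = 0)
    (f : ℕ → EuclideanSpace ℝ (Fin d)) {a b : ℕ} (hab : a ≤ b) :
    suppNorm T (f b - f a) ≤ ∑ i ∈ Finset.Ico a b, suppNorm T (f (i+1) - f i) := by
  induction b, hab using Nat.le_induction with
  | base => simp [hzero]
  | succ b hab ih =>
    have h1 : f (b+1) - f a = (f (b+1) - f b) + (f b - f a) := by abel
    rw [Finset.sum_Ico_succ_top (by omega)]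
    calc suppNorm T (f (b+1) - f a) ≤ suppNorm T (f (b+1) - f b) + suppNorm T (f b - f a) := by
          rw [h1]; exact hsub _ _
      _ ≤ suppNorm T (f (b+1) - f b) + ∑ i ∈ Finset.Ico a b, suppNorm T (f (i+1) - f i) := by
          linarith
      _ = _ := by ring

lemma sum_blocks (h : ℕ → ℝ) (b : ℕ → ℕ) (hb : Monotone b) (k : ℕ) :
    ∑ j ∈ Finset.range k, ∑ i ∈ Finset.Ico (b j) (b (j+1)), h i
      = ∑ i ∈ Finset.Ico (b 0) (b k), h i := by
  induction k with
  | zero => simp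
  | succ k ih =>
    rw [Finset.sum_range_succ, ih, Finset.sum_Ico_consecutive]
    · exact hb (Nat.zero_le k)
    · exact hb (Nat.le_succ k)

lemma polyLen_eq_natSum {m : ℕ} [NeZero m] (q : Fin m → EuclideanSpace ℝ (Fin d)) (a : ℕ) :
    ∑ i ∈ Finset.Ico a (a + m), suppNorm T (q ↑(i+1) - q ↑i) = polyLen T q := by
  have key : ∀ i : ℕ, suppNorm T (q ↑(i+1) - q ↑i)
      = (fun j : Fin m => suppNorm T (q (j+1) - q j)) ↑i := by
    intro i; simp [Nat.cast_add, Nat.cast_one]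
  rw [Finset.sum_Ico_eq_sum_range]
  simp only [Nat.add_sub_cancel_left]
  rw [← Fin.sum_univ_eq_sum_range (fun i => suppNorm T (q ↑(a+i+1) - q ↑(a+i))) m]
  have : ∀ j : Fin m, suppNorm T (q ↑(a+(j:ℕ)+1) - q ↑(a+(j:ℕ)))
      = (fun j : Fin m => suppNorm T (q (j+1) - q j)) ((↑a : Fin m) + j) := by
    intro j
    have h1 : ((a+(j:ℕ)+1 : ℕ) : Fin m) = (↑a + j) + 1 := by push_cast [Fin.cast_val_eq_self]; ring
    have h2 : ((a+(j:ℕ) : ℕ) : Fin m) = ↑a + j := by push_cast [Fin.cast_val_eq_self]; ring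
    rw [h1, h2]
  rw [Finset.sum_congr rfl (fun j _ => this j)]
  rw [Fintype.sum_equiv (Equiv.addLeft ((↑a : Fin m)))
    (fun j : Fin m => suppNorm T (q (↑a + j + 1) - q (↑a + j)))
    (fun j : Fin m => suppNorm T (q (j+1) - q j)) (fun j => rfl)]
  unfold polyLen
  exact Finset.sum_congr rfl fun j _ => by rw [cyc_eq_add_one]


/-- Helly reduction: any NotFit tuple can be replaced by one with `d + 1` points, based at 0,
of no greater length. -/
lemma reduce_tuple (hd : 1 ≤ d) (hKconv : Convex ℝ K)
    (hTc : IsCompact T) (hT0 : (0:EuclideanSpace ℝ (Fin d)) ∈ T)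
    {m : ℕ} (hm : 2 ≤ m) (q : Fin m → EuclideanSpace ℝ (Fin d)) (hq : NotFit K q) :
    ∃ Q : Fin (d+1) → EuclideanSpace ℝ (Fin d),
      NotFit K Q ∧ Q 0 = 0 ∧ polyLen T Q ≤ polyLen T q := by
  classical
  haveI : NeZero m := ⟨by omega⟩
  set X : Fin m → Set (EuclideanSpace ℝ (Fin d)) :=
    fun i => {t | q i - t ∈ interior K} with hX
  have hXconv : ∀ i, Convex ℝ (X i) := by
    intro i u hu v hv α β hα hβ hαβ
    show q i - (α • u + β • v) ∈ interior K
    have : q i - (α • u + β • v) = α • (q i - u) + β • (q i - v) := by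
      have h0 : α • q i + β • q i = q i := by rw [← add_smul, hαβ, one_smul]
      calc q i - (α • u + β • v) = (α • q i + β • q i) - (α • u + β • v) := by rw [h0]
        _ = α • (q i - u) + β • (q i - v) := by rw [smul_sub, smul_sub]; abel
    rw [this]
    exact hKconv.interior hu hv hα hβ hαβ
  -- Helly: find a small subfamily with empty intersection
  have hfr : Module.finrank ℝ (EuclideanSpace ℝ (Fin d)) = d := finrank_euclideanSpace_fin
  have hHelly : ∃ A : Finset (Fin m), A.card ≤ d + 1 ∧ (⋂ i ∈ A, X i) = ∅ := by
    by_contra hcon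
    push_neg at hcon
    have : (⋂ i ∈ (Finset.univ : Finset (Fin m)), X i).Nonempty := by
      apply Convex.helly_theorem' (fun i _ => hXconv i)
      intro I _ hI
      rw [hfr] at hI
      exact hcon I hI
    obtain ⟨t, ht⟩ := this
    exact hq t fun i => Set.mem_iInter₂.mp ht i (Finset.mem_univ i)
  obtain ⟨A, hAcard, hAempty⟩ := hHelly
  have hAne : A.Nonempty := by
    by_contra h
    rw [Finset.not_nonempty_iff_eq_empty] at h
    rw [h] at hAempty
    simp at hAempty
  set k := A.card with hk
  have hk1 : 1 ≤ k := Finset.card_pos.mpr hAne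
  have hk2 : k ≤ d + 1 := hAcard
  set e := A.orderIsoOfFin (rfl : A.card = k) with he
  set a : Fin k → Fin m := fun j => (e j : Fin m) with ha
  have hamono : StrictMono a := fun i j hij => e.strictMono hij
  set c : ℕ → ℕ := fun j => (a ⟨min j (k-1), by omega⟩).val with hc
  have hcmono : Monotone c := by
    intro i j hij
    exact (hamono.monotone (show (⟨min i (k-1), by omega⟩ : Fin k) ≤ ⟨min j (k-1), by omega⟩ by
      simp [Fin.le_def]; omega))
  have hclt : ∀ j, c j < m := fun j => (a _).isLt
  set b : ℕ → ℕ := fun j => if j < d + 1 then c j else c 0 + m with hb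
  have hbmono : Monotone b := by
    intro i j hij
    simp only [hb]
    by_cases hi : i < d + 1 <;> by_cases hj : j < d + 1
    · simp [hi, hj]; exact hcmono hij
    · simp [hi, hj]; exact le_of_lt (lt_of_lt_of_le (hclt i) (Nat.le_add_left m (c 0)))
    · omega
    · simp [hi, hj]
  set Q0 : Fin (d+1) → EuclideanSpace ℝ (Fin d) :=
    fun j => q (a ⟨min j.val (k-1), by omega⟩) with hQ0
  set Q : Fin (d+1) → EuclideanSpace ℝ (Fin d) := fun j => Q0 j - Q0 0 with hQ
  refine ⟨Q, ?_, by simp [hQ], ?_⟩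
  · -- NotFit
    intro t ht
    have hmem : (t + Q0 0) ∈ ⋂ i ∈ A, X i := by
      rw [Set.mem_iInter₂]
      intro i hi
      set j' := e.symm ⟨i, hi⟩ with hj'
      have hj'k : (j' : ℕ) < k := j'.isLt
      have h1 : Q0 ⟨(j' : ℕ), by omega⟩ = q i := by
        show q (a ⟨min (j' : ℕ) (k-1), by omega⟩) = q i
        have h3 : (⟨min (j' : ℕ) (k-1), by omega⟩ : Fin k) = j' := by
          apply Fin.val_injective; simp; omega
        have h6 : a j' = i := by
          show ((e j' : { x // x ∈ A }) : Fin m) = i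
          rw [hj', e.apply_symm_apply]
        rw [h3, h6]
      show q i - (t + Q0 0) ∈ interior K
      have h2 := ht ⟨(j' : ℕ), by omega⟩
      show _ ∈ interior K
      have h4 : q i - (t + Q0 0) = Q ⟨(j' : ℕ), by omega⟩ - t := by
        show _ = Q0 ⟨(j' : ℕ), by omega⟩ - Q0 0 - t
        rw [h1]; abel
      rw [h4]
      exact h2
    rw [hAempty] at hmem
    exact hmem
  · -- length
    have hsub := suppNorm_add_le hTc hT0
    have hzero := suppNorm_zero hT0
    have hQlen : polyLen T Q = polyLen T Q0 := by
      unfold polyLen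
      apply Finset.sum_congr rfl
      intro i _
      congr 1
      simp only [hQ]
      abel
    rw [hQlen]
    set f : ℕ → EuclideanSpace ℝ (Fin d) := fun i => q ↑i with hf
    -- identify Q0 along ℕ with f ∘ b
    have hkey : ∀ j ∈ Finset.range (d+1),
        suppNorm T (Q0 ↑(j+1) - Q0 ↑j) = suppNorm T (f (b (j+1)) - f (b j)) := by
      intro j hj
      rw [Finset.mem_range] at hj
      have hQ0v : ∀ j : Fin (d+1), Q0 j = f (c j.val) := by
        intro j
        show q _ = q ↑((a ⟨min j.val (k-1), by omega⟩).val)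
        rw [Fin.cast_val_eq_self]
      have hQ0j : ∀ i : ℕ, i < d + 1 → Q0 ↑i = f (c i) := by
        intro i hi
        rw [hQ0v ↑i, Fin.val_cast_of_lt hi]
      have hbj : b j = c j := if_pos hj
      rcases Nat.lt_or_ge (j+1) (d+1) with h | h
      · rw [hQ0j j hj, hQ0j (j+1) h, hbj, show b (j+1) = c (j+1) from if_pos h]
      · have hjd : j = d := by omega
        have h1 : ((j+1 : ℕ) : Fin (d+1)) = 0 := by
          subst hjd
          apply Fin.val_injective
          simp [Fin.val_cast_of_lt]
        have h2 : b (j+1) = (c 0) + m := if_neg (by omega)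
        rw [h1, h2, hbj, hQ0j j hj]
        have h5 : Q0 0 = f (c 0 + m) := by
          rw [hQ0v 0]
          show q ↑(c (0:Fin (d+1)).val) = q ↑(c 0 + m)
          have h7 : ((c 0 + m : ℕ) : Fin m) = ((c 0 : ℕ) : Fin m) := by
            rw [Nat.cast_add, Fin.natCast_self, add_zero]
          rw [Fin.val_zero, h7]
        rw [h5]
    have step1 : polyLen T Q0 = ∑ j ∈ Finset.range (d+1),
        suppNorm T (f (b (j+1)) - f (b j)) := by
      rw [← Finset.sum_congr rfl hkey]
      have := polyLen_eq_natSum (T := T) Q0 0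
      rw [← this, Finset.range_eq_Ico, Nat.zero_add]
    rw [step1]
    have step2 : ∑ j ∈ Finset.range (d+1), suppNorm T (f (b (j+1)) - f (b j))
        ≤ ∑ j ∈ Finset.range (d+1), ∑ i ∈ Finset.Ico (b j) (b (j+1)),
            suppNorm T (f (i+1) - f i) := by
      apply Finset.sum_le_sum
      intro j _
      exact suppNorm_chain hsub hzero f (hbmono (Nat.le_succ j))
    refine le_trans step2 ?_
    rw [sum_blocks _ b hbmono (d+1)]
    have hb0 : b 0 = c 0 := if_pos (by omega)
    have hbd : b (d+1) = c 0 + m := if_neg (by omega)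
    rw [hb0, hbd]
    rw [show (∑ i ∈ Finset.Ico (c 0) (c 0 + m), suppNorm T (f (i+1) - f i))
        = ∑ i ∈ Finset.Ico (c 0) (c 0 + m), suppNorm T (q ↑(i+1) - q ↑i) from rfl]
    rw [polyLen_eq_natSum q (c 0)]


lemma polyLen_nonneg (hTc : IsCompact T) (hT0 : (0:EuclideanSpace ℝ (Fin d)) ∈ T)
    {m : ℕ} (q : Fin m → EuclideanSpace ℝ (Fin d)) : 0 ≤ polyLen T q :=
  Finset.sum_nonneg fun i _ => suppNorm_nonneg hTc hT0 _

lemma suppNorm_continuous (hTc : IsCompact T) (hT0 : (0:EuclideanSpace ℝ (Fin d)) ∈ T) :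
    Continuous (suppNorm T) := by
  obtain ⟨R, hR⟩ := hTc.isBounded.exists_norm_le
  have hR0 : 0 ≤ R := le_trans (norm_nonneg _) (hR 0 hT0)
  have key : ∀ a b : EuclideanSpace ℝ (Fin d),
      suppNorm T a - suppNorm T b ≤ R * ‖a - b‖ := by
    intro a b
    have h1 : suppNorm T a ≤ suppNorm T b + suppNorm T (a - b) := by
      have := suppNorm_add_le hTc hT0 b (a - b)
      rwa [add_sub_cancel] at this
    have h2 : suppNorm T (a - b) ≤ R * ‖a - b‖ := suppNorm_le_mul hT0 hR _
    linarith
  rw [Metric.continuous_iff]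
  intro x ε hε
  rcases eq_or_lt_of_le hR0 with h | h
  · exact ⟨1, by norm_num, fun y _ => by
      have h1 := key y x; have h2 := key x y
      rw [← h] at h1 h2
      simp only [Real.dist_eq, zero_mul] at *
      rw [abs_lt]; constructor <;> linarith⟩
  · refine ⟨ε / R, by positivity, fun y hy => ?_⟩
    have h1 := key y x
    have h2 := key x y
    have hxy : ‖y - x‖ < ε / R := by rwa [← dist_eq_norm]
    have hxy' : ‖x - y‖ < ε / R := by rwa [norm_sub_rev]
    have hmul1 : R * ‖y - x‖ < ε := by
      have := mul_lt_mul_of_pos_left hxy h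
      rwa [mul_div_cancel₀ _ (ne_of_gt h)] at this
    have hmul2 : R * ‖x - y‖ < ε := by
      have := mul_lt_mul_of_pos_left hxy' h
      rwa [mul_div_cancel₀ _ (ne_of_gt h)] at this
    rw [Real.dist_eq, abs_lt]
    constructor <;> linarith


end NatIndexing
end AuxLemmas

/-- Bezdek–Bezdek / Akopyan–Karasev: the infimum defining `ξ_T(K)` is
attained by a closed polygonal line with at most `n + 1` vertices. -/
theorem xi_attained (n : ℕ) (hn : 1 ≤ n)
    (K T : Set (EuclideanSpace ℝ (Fin n)))
    (hK : IsConvexBody K) (hT : IsConvexBody T)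
    (hK0 : (0 : EuclideanSpace ℝ (Fin n)) ∈ interior K)
    (hT0 : (0 : EuclideanSpace ℝ (Fin n)) ∈ interior T) :
    ∃ m : ℕ, 2 ≤ m ∧ m ≤ n + 1 ∧ ∃ q : Fin m → EuclideanSpace ℝ (Fin n),
      NotFit K q ∧ polyLen T q = xi T K := by
  classical
  have hTc : IsCompact T := hT.1
  have hT0T : (0 : EuclideanSpace ℝ (Fin n)) ∈ T := interior_subset hT0
  have hsub := suppNorm_add_le hTc hT0T
  have hzero := suppNorm_zero hT0T
  obtain ⟨r, hr, hrlow⟩ := suppNorm_lower hTc hT0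
  -- witness tuple
  obtain ⟨RK, hRK⟩ := hK.1.isBounded.exists_norm_le
  have hRK0 : 0 ≤ RK := le_trans (norm_nonneg _) (hRK 0 (interior_subset hK0))
  set v : EuclideanSpace ℝ (Fin n) := EuclideanSpace.single ⟨0, hn⟩ (2*RK+1) with hv
  have hvnorm : ‖v‖ = 2*RK+1 := by
    rw [hv, EuclideanSpace.norm_single, Real.norm_eq_abs, abs_of_pos (by linarith)]
  set w : Fin (n+1) → EuclideanSpace ℝ (Fin n) := fun j => if j = 0 then 0 else v with hw
  have hwNF : NotFit K w := by
    intro t ht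
    have h0 := ht 0
    have h1 := ht 1
    simp only [hw] at h0 h1
    have h0' : (0:EuclideanSpace ℝ (Fin n)) - t ∈ interior K := by simpa using h0
    have h1' : v - t ∈ interior K := by
      rwa [if_neg (show (1 : Fin (n+1)) ≠ 0 from by
        rw [Ne, Fin.one_eq_zero_iff]; omega)] at h1
    have hb0 : ‖(0:EuclideanSpace ℝ (Fin n)) - t‖ ≤ RK := hRK _ (interior_subset h0')
    have hb1 : ‖v - t‖ ≤ RK := hRK _ (interior_subset h1')
    have : ‖v‖ ≤ 2 * RK := by
      calc ‖v‖ = ‖(v - t) - ((0:EuclideanSpace ℝ (Fin n)) - t)‖ := by congr 1; abel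
        _ ≤ ‖v - t‖ + ‖(0:EuclideanSpace ℝ (Fin n)) - t‖ := norm_sub_le _ _
        _ ≤ 2 * RK := by linarith
    rw [hvnorm] at this
    linarith
  have hw0 : w 0 = 0 := by rw [hw]; simp
  set L₀ : ℝ := polyLen T w with hL₀
  set S : Set ℝ := { L : ℝ | ∃ m : ℕ, 2 ≤ m ∧ ∃ q : Fin m → EuclideanSpace ℝ (Fin n),
    NotFit K q ∧ L = polyLen T q } with hS
  have hSne : S.Nonempty := ⟨L₀, n+1, by omega, w, hwNF, rfl⟩
  have hSbd : BddBelow S := by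
    refine ⟨0, fun L hL => ?_⟩
    obtain ⟨m, _, q, _, rfl⟩ := hL
    exact polyLen_nonneg hTc hT0T q
  -- the compact domain
  set D : Set (Fin (n+1) → EuclideanSpace ℝ (Fin n)) :=
    {q | NotFit K q ∧ q 0 = 0 ∧ polyLen T q ≤ L₀} with hD
  have hwD : w ∈ D := ⟨hwNF, hw0, le_refl _⟩
  have hplcont : Continuous (fun q : Fin (n+1) → EuclideanSpace ℝ (Fin n) => polyLen T q) := by
    apply continuous_finset_sum
    intro i _
    exact (suppNorm_continuous hTc hT0T).comp
      (((continuous_apply (cyc i))).sub (continuous_apply i))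
  have hNFclosed : IsClosed {q : Fin (n+1) → EuclideanSpace ℝ (Fin n) | NotFit K q} := by
    have heq : {q : Fin (n+1) → EuclideanSpace ℝ (Fin n) | NotFit K q}
        = (⋃ t : EuclideanSpace ℝ (Fin n), ⋂ i : Fin (n+1),
            (fun q : Fin (n+1) → EuclideanSpace ℝ (Fin n) => q i - t) ⁻¹' interior K)ᶜ := by
      ext q
      simp only [Set.mem_setOf_eq, Set.mem_compl_iff, Set.mem_iUnion, Set.mem_iInter,
        Set.mem_preimage, not_exists, NotFit]
    rw [heq]
    apply IsOpen.isClosed_compl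
    apply isOpen_iUnion
    intro t
    apply isOpen_iInter_of_finite
    intro i
    exact isOpen_interior.preimage ((continuous_apply i).sub continuous_const)
  have hDclosed : IsClosed D := by
    have heq : D = {q : Fin (n+1) → EuclideanSpace ℝ (Fin n) | NotFit K q}
        ∩ ({q | q 0 = 0} ∩ {q | polyLen T q ≤ L₀}) := rfl
    rw [heq]
    exact hNFclosed.inter ((isClosed_eq (continuous_apply 0) continuous_const).inter
      (isClosed_le hplcont continuous_const))
  -- boundedness of D
  have hL₀0 : 0 ≤ L₀ := polyLen_nonneg hTc hT0T w
  have hDbdd : Bornology.IsBounded D := by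
    apply (Metric.isBounded_closedBall (x := (0 : Fin (n+1) → EuclideanSpace ℝ (Fin n)))
      (r := L₀ / r)).subset
    intro q hq
    obtain ⟨hqNF, hq0, hqL⟩ := hq
    rw [Metric.mem_closedBall, dist_zero_right]
    rw [pi_norm_le_iff_of_nonneg (by positivity)]
    intro i
    set f : ℕ → EuclideanSpace ℝ (Fin n) := fun l => q ↑l with hf
    have h1 : r * ‖q i‖ ≤ suppNorm T (q i - q 0) := by
      rw [hq0, sub_zero]; exact hrlow _
    have h2 : suppNorm T (q i - q 0) = suppNorm T (f i.val - f 0) := by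
      rw [hf]
      simp only [Nat.cast_zero, Fin.cast_val_eq_self]
    have h3 : suppNorm T (f i.val - f 0) ≤
        ∑ l ∈ Finset.Ico 0 i.val, suppNorm T (f (l+1) - f l) :=
      suppNorm_chain hsub hzero f (Nat.zero_le _)
    have h4 : ∑ l ∈ Finset.Ico 0 i.val, suppNorm T (f (l+1) - f l)
        ≤ ∑ l ∈ Finset.Ico 0 (0 + (n+1)), suppNorm T (f (l+1) - f l) := by
      apply Finset.sum_le_sum_of_subset_of_nonneg
      · apply Finset.Ico_subset_Ico le_rfl; omega
      · intro l _ _; exact suppNorm_nonneg hTc hT0T _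
    have h5 : ∑ l ∈ Finset.Ico 0 (0 + (n+1)), suppNorm T (f (l+1) - f l) = polyLen T q := by
      exact polyLen_eq_natSum q 0
    have : r * ‖q i‖ ≤ L₀ := by
      rw [h2] at h1
      calc r * ‖q i‖ ≤ _ := h1
        _ ≤ _ := h3
        _ ≤ _ := h4
        _ = polyLen T q := h5
        _ ≤ L₀ := hqL
    rw [le_div_iff₀ hr]
    linarith [this]
  have hDcompact : IsCompact D := Metric.isCompact_of_isClosed_isBounded hDclosed hDbdd
  obtain ⟨qs, hqsD, hqsmin⟩ := hDcompact.exists_isMinOn ⟨w, hwD⟩ hplcont.continuousOn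
  refine ⟨n+1, by omega, le_refl _, qs, hqsD.1, ?_⟩
  have hxi : xi T K = sInf S := by rw [xi, hS]
  rw [hxi]
  apply le_antisymm
  · apply le_csInf hSne
    intro L hL
    obtain ⟨m, hm, q, hq, rfl⟩ := hL
    obtain ⟨Q, hQNF, hQ0, hQle⟩ := reduce_tuple hn hK.2.1 hTc hT0T hm q hq
    by_cases hcase : polyLen T Q ≤ L₀
    · have hQD : Q ∈ D := ⟨hQNF, hQ0, hcase⟩
      exact le_trans (isMinOn_iff.mp hqsmin Q hQD) hQle
    · push_neg at hcase
      have h1 : polyLen T qs ≤ L₀ := isMinOn_iff.mp hqsmin w hwD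
      linarith
  · exact csInf_le hSbd ⟨n+1, by omega, qs, hqsD.1, rfl⟩
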